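/- Fix a time t, a window τ < t, and any fixed (deterministic) strategy π ∈ 𝒞. Then for every δ ∈ (0,1), with probability at least 1 − δ: Σ_f π_f d̂_{f,t} 𝓛_f ≤ E[R_t(π) | ℱ_{t−1}] + D^π_t(u_τ) + H_max √(2 log(1/δ)/τ), where d̂_{f,t} = (1/τ) Σ_{s=t−τ}^{t−1} D_{f,s} and D^π_t(u_τ) = | (1/τ) Σ_{s=t−τ}^{t−1} ( E[R_t(π) | ℱ_{t−1}] − E[R_s(π) | ℱ_{s−1}] ) | is the (uniform-weight) discrepancy of π across the window. -/

import Mathlib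

open MeasureTheory Finset

noncomputable section

/-- The set of coded caching strategies: fractions in `[0,1]` for each file,
subject to the cache size constraint. -/
def cacheSet (N : ℕ) (L : Fin N → ℝ) (Cap : ℝ) : Set (Fin N → ℝ) :=
  {p | (∀ f, 0 ≤ p f ∧ p f ≤ 1) ∧ ∑ f, p f * L f ≤ Cap}

/-- Hit rate of a (possibly random) caching strategy `p` with demands `D`. -/
def hitRate {Ω : Type*} {N : ℕ} (L : Fin N → ℝ) (D : Fin N → Ω → ℝ)
    (p : Ω → Fin N → ℝ) (ω : Ω) : ℝ :=
  ∑ f, D f ω * p ω f * L f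


lemma my_integrable_of_bound {Ω : Type*} [MeasurableSpace Ω] {μ : Measure Ω}
    [IsFiniteMeasure μ] {f : Ω → ℝ} (hf : AEStronglyMeasurable f μ) {K : ℝ}
    (h : ∀ᵐ ω ∂μ, |f ω| ≤ K) : Integrable f μ :=
  (integrable_const K).mono' hf (h.mono fun ω hω => by simpa using hω)

lemma my_exp_chord {x c l : ℝ} (hc : 0 < c) (hx : |x| ≤ c) :
    Real.exp (l * x) ≤ Real.cosh (l * c) + (x / c) * Real.sinh (l * c) := by
  have hx1 : -c ≤ x := neg_le_of_abs_le hx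
  have hx2 : x ≤ c := le_of_abs_le hx
  have ha : (0:ℝ) ≤ (c - x) / (2 * c) := div_nonneg (by linarith) (by linarith)
  have hb : (0:ℝ) ≤ (c + x) / (2 * c) := div_nonneg (by linarith) (by linarith)
  have hab : (c - x) / (2 * c) + (c + x) / (2 * c) = 1 := by field_simp; ring
  have h := convexOn_exp.2 (Set.mem_univ (-(l * c))) (Set.mem_univ (l * c)) ha hb hab
  simp only [smul_eq_mul] at h
  have harg : (c - x) / (2 * c) * (-(l * c)) + (c + x) / (2 * c) * (l * c) = l * x := by
    field_simp; ring
  rw [harg] at h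
  refine h.trans (le_of_eq ?_)
  rw [Real.cosh_eq, Real.sinh_eq]
  field_simp
  ring

lemma my_condexp_exp_le {Ω : Type*} [m0 : MeasurableSpace Ω] {μ : Measure Ω}
    [IsProbabilityMeasure μ] {m : MeasurableSpace Ω} (hm : m ≤ m0) {X : Ω → ℝ} {c l : ℝ}
    (hc : 0 < c) (hbd : ∀ᵐ ω ∂μ, |X ω| ≤ c)
    (hXint : Integrable X μ) (hEint : Integrable (fun ω => Real.exp (l * X ω)) μ)
    (hce : μ[X|m] =ᵐ[μ] 0) :
    μ[fun ω => Real.exp (l * X ω)|m] ≤ᵐ[μ] fun _ => Real.exp (l ^ 2 * c ^ 2 / 2) := by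
  have hGint : Integrable (fun ω => Real.cosh (l * c) + (X ω / c) * Real.sinh (l * c)) μ :=
    (integrable_const _).add ((hXint.div_const c).mul_const _)
  have h1 : μ[fun ω => Real.exp (l * X ω)|m]
      ≤ᵐ[μ] μ[fun ω => Real.cosh (l * c) + (X ω / c) * Real.sinh (l * c)|m] :=
    condExp_mono hEint hGint (hbd.mono fun ω hω => my_exp_chord hc hω)
  have e1 : (fun ω => Real.cosh (l * c) + (X ω / c) * Real.sinh (l * c))
      = (fun _ : Ω => Real.cosh (l * c)) + (Real.sinh (l * c) / c) • X := by
    funext ω; simp only [Pi.add_apply, Pi.smul_apply, smul_eq_mul]; ring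
  have h2 : μ[fun ω => Real.cosh (l * c) + (X ω / c) * Real.sinh (l * c)|m]
      =ᵐ[μ] fun _ => Real.cosh (l * c) := by
    rw [e1]
    refine (condExp_add (integrable_const _) (hXint.smul (Real.sinh (l * c) / c)) _).trans ?_
    have hcst : μ[(fun _ : Ω => Real.cosh (l * c))|m] = fun _ => Real.cosh (l * c) :=
      condExp_const hm _
    have hb := condExp_smul (μ := μ) (m := m) (Real.sinh (l * c) / c) X
    filter_upwards [hb, hce] with ω hbω hceω
    simp only [Pi.add_apply, hcst, hbω, Pi.smul_apply, hceω, Pi.zero_apply, smul_eq_mul,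
      mul_zero, add_zero]
  filter_upwards [h1, h2] with ω hu hv
  refine le_trans hu ?_
  rw [hv]
  exact (Real.cosh_le_exp_half_sq _).trans (le_of_eq (by rw [mul_pow]))

lemma my_azuma {Ω : Type*} [m0 : MeasurableSpace Ω] (μ : Measure Ω) [IsProbabilityMeasure μ]
    (F : Filtration ℕ m0) (X : ℕ → Ω → ℝ) (c : ℝ) (hc : 0 < c)
    (hmeas : ∀ s, Measurable[F s] (X s))
    (hbd : ∀ s, ∀ᵐ ω ∂μ, |X s ω| ≤ c)
    (hce : ∀ s, μ[X s|F (s - 1)] =ᵐ[μ] 0)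
    (a n : ℕ) (hn : 0 < n) (ε : ℝ) (hε : 0 < ε) :
    (μ {ω | ε ≤ ∑ s ∈ Finset.Ico a (a + n), X s ω}).toReal
      ≤ Real.exp (-(ε ^ 2) / (2 * n * c ^ 2)) := by
  set lam : ℝ := ε / (n * c ^ 2) with hlam_def
  have hlam : 0 < lam := by
    apply div_pos hε
    positivity
  have hXm : ∀ s, Measurable (X s) := fun s => (hmeas s).mono (F.le s) le_rfl
  have hXint : ∀ s, Integrable (X s) μ := fun s =>
    my_integrable_of_bound (hXm s).aestronglyMeasurable (hbd s)
  have hbd_all : ∀ᵐ ω ∂μ, ∀ s, |X s ω| ≤ c := (ae_all_iff).2 hbd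
  -- sum bounds
  have hSbd : ∀ k : ℕ, ∀ ω, (∀ s, |X s ω| ≤ c) →
      |∑ s ∈ Finset.Ico a (a + k), X s ω| ≤ k * c := by
    intro k ω h
    calc |∑ s ∈ Finset.Ico a (a + k), X s ω| ≤ ∑ s ∈ Finset.Ico a (a + k), |X s ω| :=
          Finset.abs_sum_le_sum_abs _ _
      _ ≤ ∑ _s ∈ Finset.Ico a (a + k), c := Finset.sum_le_sum fun s _ => h s
      _ = k * c := by
          rw [Finset.sum_const, Nat.card_Ico, Nat.add_sub_cancel_left, nsmul_eq_mul]
  have hEmeas : ∀ k : ℕ, Measurable fun ω => Real.exp (lam * ∑ s ∈ Finset.Ico a (a + k), X s ω) := by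
    intro k
    exact Real.measurable_exp.comp ((Finset.measurable_sum _ fun s _ => hXm s).const_mul lam)
  have hEint : ∀ k : ℕ,
      Integrable (fun ω => Real.exp (lam * ∑ s ∈ Finset.Ico a (a + k), X s ω)) μ := by
    intro k
    refine my_integrable_of_bound (hEmeas k).aestronglyMeasurable (K := Real.exp (lam * (k * c))) ?_
    filter_upwards [hbd_all] with ω hω
    rw [abs_of_pos (Real.exp_pos _)]
    exact Real.exp_le_exp.2 (mul_le_mul_of_nonneg_left
      ((le_abs_self _).trans (hSbd k ω hω)) hlam.le)
  -- single-step exp integrability and conditional bound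
  have hexpint : ∀ s : ℕ, Integrable (fun ω => Real.exp (lam * X s ω)) μ := by
    intro s
    refine my_integrable_of_bound
      (Real.measurable_exp.comp ((hXm s).const_mul lam)).aestronglyMeasurable
      (K := Real.exp (lam * c)) ?_
    filter_upwards [hbd s] with ω hω
    rw [abs_of_pos (Real.exp_pos _)]
    exact Real.exp_le_exp.2 (mul_le_mul_of_nonneg_left ((le_abs_self _).trans hω) hlam.le)
  have hMGF : ∀ s : ℕ, μ[fun ω => Real.exp (lam * X s ω)|F (s - 1)]
      ≤ᵐ[μ] fun _ => Real.exp (lam ^ 2 * c ^ 2 / 2) := fun s =>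
    my_condexp_exp_le (F.le (s - 1)) hc (hbd s) (hXint s) (hexpint s) (hce s)
  -- induction
  have hind : ∀ k : ℕ,
      (∫ ω, Real.exp (lam * ∑ s ∈ Finset.Ico a (a + k), X s ω) ∂μ)
        ≤ Real.exp (k * (lam ^ 2 * c ^ 2 / 2)) := by
    intro k
    induction k with
    | zero => simp
    | succ k ih =>
      set m := a + k with hm
      have hsum : ∀ ω, ∑ s ∈ Finset.Ico a (a + (k + 1)), X s ω
          = (∑ s ∈ Finset.Ico a m, X s ω) + X m ω := by
        intro ω
        rw [show a + (k + 1) = m + 1 from rfl]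
        exact Finset.sum_Ico_succ_top (Nat.le_add_right a k) _
      set g : Ω → ℝ := fun ω => Real.exp (lam * ∑ s ∈ Finset.Ico a m, X s ω) with hg
      set he : Ω → ℝ := fun ω => Real.exp (lam * X m ω) with hhe
      have hg_sm : StronglyMeasurable[F (m - 1)] g := by
        apply Measurable.stronglyMeasurable
        refine Real.measurable_exp.comp (Measurable.const_mul ?_ lam)
        refine Finset.measurable_sum _ fun s hs => ?_
        have hsm : s ≤ m - 1 := Nat.le_pred_of_lt (Finset.mem_Ico.1 hs).2
        exact ((hmeas s).mono (F.mono hsm) le_rfl)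
      have hgbd : ∀ᵐ ω ∂μ, |g ω| ≤ Real.exp (lam * (k * c)) := by
        filter_upwards [hbd_all] with ω hω
        rw [abs_of_pos (Real.exp_pos _)]
        exact Real.exp_le_exp.2 (mul_le_mul_of_nonneg_left
          ((le_abs_self _).trans (hSbd k ω hω)) hlam.le)
      have hg_int : Integrable g μ := hEint k
      have he_int : Integrable he μ := hexpint m
      have hge_int : Integrable (g * he) μ := by
        refine my_integrable_of_bound
          (((hEmeas k).mul (Real.measurable_exp.comp ((hXm m).const_mul lam))).aestronglyMeasurable)
          (K := Real.exp (lam * (k * c)) * Real.exp (lam * c)) ?_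
        filter_upwards [hbd_all] with ω hω
        rw [Pi.mul_apply, abs_mul]
        have h1 : |g ω| ≤ Real.exp (lam * (k * c)) := by
          rw [abs_of_pos (Real.exp_pos _)]
          exact Real.exp_le_exp.2 (mul_le_mul_of_nonneg_left
            ((le_abs_self _).trans (hSbd k ω hω)) hlam.le)
        have h2 : |he ω| ≤ Real.exp (lam * c) := by
          rw [abs_of_pos (Real.exp_pos _)]
          exact Real.exp_le_exp.2 (mul_le_mul_of_nonneg_left
            ((le_abs_self _).trans (hω m)) hlam.le)
        exact mul_le_mul h1 h2 (abs_nonneg _) (Real.exp_pos _).le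
      have hcemul := condExp_mul_of_stronglyMeasurable_left hg_sm hge_int he_int
      have hce_bd : ∀ᵐ ω ∂μ, (μ[he|F (m - 1)]) ω ≤ Real.exp (lam ^ 2 * c ^ 2 / 2) := hMGF m
      have hce_nn : 0 ≤ᵐ[μ] μ[he|F (m - 1)] :=
        condExp_nonneg (ae_of_all _ fun ω => (Real.exp_pos _).le)
      have hgce_int : Integrable (fun ω => g ω * (μ[he|F (m - 1)]) ω) μ := by
        refine my_integrable_of_bound
          (((hEmeas k).mul (stronglyMeasurable_condExp.mono (F.le (m - 1))).measurable).aestronglyMeasurable)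
          (K := Real.exp (lam * (k * c)) * Real.exp (lam ^ 2 * c ^ 2 / 2)) ?_
        filter_upwards [hgbd, hce_bd, hce_nn] with ω h1 h2 h3
        rw [abs_mul]
        refine mul_le_mul h1 ?_ (abs_nonneg _) (Real.exp_pos _).le
        rw [abs_of_nonneg h3]; exact h2
      calc (∫ ω, Real.exp (lam * ∑ s ∈ Finset.Ico a (a + (k + 1)), X s ω) ∂μ)
          = ∫ ω, g ω * he ω ∂μ := by
            refine integral_congr_ae (ae_of_all _ fun ω => ?_)
            show Real.exp (lam * ∑ s ∈ Finset.Ico a (a + (k + 1)), X s ω) = g ω * he ω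
            rw [hsum ω, mul_add, Real.exp_add]
        _ = ∫ ω, (μ[g * he|F (m - 1)]) ω ∂μ := (integral_condExp (F.le (m - 1))).symm
        _ = ∫ ω, g ω * (μ[he|F (m - 1)]) ω ∂μ := integral_congr_ae (hcemul.mono fun ω hω => by
            simpa [Pi.mul_apply] using hω)
        _ ≤ ∫ ω, g ω * Real.exp (lam ^ 2 * c ^ 2 / 2) ∂μ := by
            refine integral_mono_ae hgce_int (hg_int.mul_const _) ?_
            filter_upwards [hce_bd] with ω h2
            exact mul_le_mul_of_nonneg_left h2 (Real.exp_pos _).le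
        _ = (∫ ω, g ω ∂μ) * Real.exp (lam ^ 2 * c ^ 2 / 2) := integral_mul_const _ _
        _ ≤ Real.exp (k * (lam ^ 2 * c ^ 2 / 2)) * Real.exp (lam ^ 2 * c ^ 2 / 2) :=
            mul_le_mul_of_nonneg_right ih (Real.exp_pos _).le
        _ = Real.exp ((k + 1 : ℕ) * (lam ^ 2 * c ^ 2 / 2)) := by
            rw [← Real.exp_add]; push_cast; ring_nf
  -- Markov
  have hZnn : 0 ≤ᵐ[μ] fun ω => Real.exp (lam * ∑ s ∈ Finset.Ico a (a + n), X s ω) :=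
    ae_of_all _ fun ω => (Real.exp_pos _).le
  have hmar := mul_meas_ge_le_integral_of_nonneg hZnn (hEint n) (Real.exp (lam * ε))
  have hsetEq : {x | Real.exp (lam * ε) ≤ Real.exp (lam * ∑ s ∈ Finset.Ico a (a + n), X s x)}
      = {ω | ε ≤ ∑ s ∈ Finset.Ico a (a + n), X s ω} := by
    ext ω
    simp only [Set.mem_setOf_eq, Real.exp_le_exp, mul_le_mul_iff_right₀ hlam]
  rw [hsetEq] at hmar
  have hfin := (hind n).trans_eq' rfl
  have hK : (0:ℝ) < Real.exp (lam * ε) := Real.exp_pos _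
  have h1 : (μ {ω | ε ≤ ∑ s ∈ Finset.Ico a (a + n), X s ω}).toReal
      ≤ Real.exp (n * (lam ^ 2 * c ^ 2 / 2)) / Real.exp (lam * ε) := by
    rw [le_div_iff₀ hK, mul_comm]
    exact hmar.trans (hind n)
  refine h1.trans (le_of_eq ?_)
  rw [← Real.exp_sub]
  congr 1
  have hn' : ((n:ℝ)) ≠ 0 := Nat.cast_ne_zero.2 hn.ne'
  have hc' : (c:ℝ) ≠ 0 := hc.ne'
  rw [hlam_def]
  field_simp
  ring

/-- For a fixed strategy `q` in the cache set, with probability at least `1 - delta`,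
the windowed-average empirical hit rate is bounded by the conditional expected hit
rate at time `t`, plus the uniform-weight discrepancy of `q` across the window, plus
`H_max * sqrt(2 log(1/delta)/tau)`. -/
theorem lrfu_discrepancy_step
    {Ω : Type*} [mΩ : MeasurableSpace Ω] (μ : Measure Ω) [IsProbabilityMeasure μ]
    {N : ℕ} (L : Fin N → ℝ) (hL : ∀ f, 0 < L f) (Cap : ℝ) (hCap : 0 < Cap)
    (F : Filtration ℕ mΩ)
    (D : Fin N → ℕ → Ω → ℝ)
    (hD0 : ∀ f t ω, 0 ≤ D f t ω)
    (hDmeas : ∀ f t, Measurable[F t] (D f t))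
    (Hmax : ℝ)
    (hHmax : ∀ t, ∀ r ∈ cacheSet N L Cap,
      ∀ᵐ ω ∂μ, 0 ≤ hitRate L (fun f => D f t) (fun _ => r) ω ∧
        hitRate L (fun f => D f t) (fun _ => r) ω ≤ Hmax)
    (t τ : ℕ) (hτ0 : 0 < τ) (hτt : τ < t)
    (q : Fin N → ℝ) (hq : q ∈ cacheSet N L Cap)
    (δ : ℝ) (hδ : δ ∈ Set.Ioo (0 : ℝ) 1) :
    ENNReal.ofReal (1 - δ) ≤
      μ {ω |
        (∑ f, q f * ((1 / (τ : ℝ)) * ∑ s ∈ Finset.Ico (t - τ) t, D f s ω) * L f)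
          ≤ (μ[hitRate L (fun f => D f t) (fun _ => q) | F (t - 1)]) ω
            + |(1 / (τ : ℝ)) * ∑ s ∈ Finset.Ico (t - τ) t,
                ((μ[hitRate L (fun f => D f t) (fun _ => q) | F (t - 1)]) ω
                  - (μ[hitRate L (fun f => D f s) (fun _ => q) | F (s - 1)]) ω)|
            + Hmax * Real.sqrt (2 * Real.log (1 / δ) / (τ : ℝ))} := by
  obtain ⟨hδ0, hδ1⟩ := hδ
  have hτR : (0:ℝ) < τ := Nat.cast_pos.2 hτ0
  have hτne : (τ:ℝ) ≠ 0 := hτR.ne'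
  set R : ℕ → Ω → ℝ := fun s => hitRate L (fun f => D f s) (fun _ => q) with hR
  set CE : ℕ → Ω → ℝ := fun s => μ[R s|F (s - 1)] with hCE
  have hswap : ∀ ω, (∑ f, q f * ((1 / (τ : ℝ)) * ∑ s ∈ Finset.Ico (t - τ) t, D f s ω) * L f)
      = (1 / (τ : ℝ)) * ∑ s ∈ Finset.Ico (t - τ) t, R s ω := by
    intro ω
    calc (∑ f, q f * ((1 / (τ : ℝ)) * ∑ s ∈ Finset.Ico (t - τ) t, D f s ω) * L f)
        = ∑ f, ∑ s ∈ Finset.Ico (t - τ) t, (1 / (τ : ℝ)) * (D f s ω * q f * L f) := by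
          refine Finset.sum_congr rfl fun f _ => ?_
          rw [show q f * ((1 / (τ : ℝ)) * ∑ s ∈ Finset.Ico (t - τ) t, D f s ω) * L f
              = (1 / (τ : ℝ)) * ((∑ s ∈ Finset.Ico (t - τ) t, D f s ω) * (q f * L f)) from by
            ring, Finset.sum_mul, Finset.mul_sum]
          exact Finset.sum_congr rfl fun s _ => by ring
      _ = ∑ s ∈ Finset.Ico (t - τ) t, ∑ f, (1 / (τ : ℝ)) * (D f s ω * q f * L f) :=
          Finset.sum_comm
      _ = (1 / (τ : ℝ)) * ∑ s ∈ Finset.Ico (t - τ) t, R s ω := by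
          rw [Finset.mul_sum]
          refine Finset.sum_congr rfl fun s _ => ?_
          rw [show R s ω = ∑ f, D f s ω * q f * L f from rfl, Finset.mul_sum]
  suffices h : ENNReal.ofReal (1 - δ) ≤
      μ {ω | (1 / (τ : ℝ)) * ∑ s ∈ Finset.Ico (t - τ) t, R s ω
          ≤ CE t ω
            + |(1 / (τ : ℝ)) * ∑ s ∈ Finset.Ico (t - τ) t, (CE t ω - CE s ω)|
            + Hmax * Real.sqrt (2 * Real.log (1 / δ) / (τ : ℝ))} by
    refine le_trans h (le_of_eq ?_)
    congr 1
    ext ω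
    simp only [Set.mem_setOf_eq]
    rw [hswap ω]
  -- basic facts
  have hRmeas : ∀ s, Measurable[F s] (R s) := fun s =>
    Finset.measurable_sum _ fun f _ => ((hDmeas f s).mul_const (q f)).mul_const (L f)
  have hRbd : ∀ s, ∀ᵐ ω ∂μ, 0 ≤ R s ω ∧ R s ω ≤ Hmax := fun s => hHmax s q hq
  haveI : (ae μ).NeBot := ae_neBot.2 (IsProbabilityMeasure.ne_zero μ)
  have hHnn : 0 ≤ Hmax := by
    obtain ⟨ω, h0, h1⟩ := (hRbd t).exists
    linarith
  have hRint : ∀ s, Integrable (R s) μ := by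
    intro s
    refine my_integrable_of_bound ((hRmeas s).mono (F.le s) le_rfl).aestronglyMeasurable
      (K := Hmax) ?_
    filter_upwards [hRbd s] with ω hω
    exact abs_le.2 ⟨by linarith [hω.1], hω.2⟩
  have hCEbd : ∀ s, ∀ᵐ ω ∂μ, 0 ≤ CE s ω ∧ CE s ω ≤ Hmax := by
    intro s
    have h0 : 0 ≤ᵐ[μ] CE s := condExp_nonneg ((hRbd s).mono fun ω hω => hω.1)
    have h1 := condExp_mono (m := F (s - 1)) (hRint s) (integrable_const Hmax)
      ((hRbd s).mono fun ω hω => hω.2)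
    rw [condExp_const (F.le (s - 1))] at h1
    filter_upwards [h0, h1] with ω u v
    exact ⟨u, v⟩
  set X : ℕ → Ω → ℝ := fun s ω => R s ω - CE s ω with hX
  have hXmeas : ∀ s, Measurable[F s] (X s) := fun s =>
    (hRmeas s).sub ((stronglyMeasurable_condExp.mono (F.mono (Nat.sub_le s 1))).measurable)
  have hXbd : ∀ s, ∀ᵐ ω ∂μ, |X s ω| ≤ Hmax := by
    intro s
    filter_upwards [hRbd s, hCEbd s] with ω h1 h2
    exact abs_le.2 ⟨by simp only [hX]; linarith [h1.1, h2.2], by simp only [hX]; linarith [h1.2, h2.1]⟩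
  have hXce : ∀ s, μ[X s|F (s - 1)] =ᵐ[μ] 0 := by
    intro s
    refine (condExp_sub (hRint s) integrable_condExp _).trans ?_
    refine Filter.EventuallyEq.of_eq ?_
    rw [condExp_of_stronglyMeasurable (F.le (s - 1)) stronglyMeasurable_condExp
      integrable_condExp]
    exact sub_self _
  rcases eq_or_lt_of_le hHnn with hH0 | hHpos
  · -- degenerate case Hmax = 0
    have hae : ∀ᵐ ω ∂μ, ∀ s, R s ω = 0 ∧ CE s ω = 0 := by
      refine ae_all_iff.2 fun s => ?_
      filter_upwards [hRbd s, hCEbd s] with ω h1 h2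
      constructor <;> linarith [h1.1, h1.2, h2.1, h2.2, hH0.symm ▸ (le_refl (0:ℝ))]
    have hmem : ∀ᵐ ω ∂μ, ω ∈ {ω | (1 / (τ : ℝ)) * ∑ s ∈ Finset.Ico (t - τ) t, R s ω
        ≤ CE t ω + |(1 / (τ : ℝ)) * ∑ s ∈ Finset.Ico (t - τ) t, (CE t ω - CE s ω)|
          + Hmax * Real.sqrt (2 * Real.log (1 / δ) / (τ : ℝ))} := by
      filter_upwards [hae] with ω hω
      show (1 / (τ : ℝ)) * ∑ s ∈ Finset.Ico (t - τ) t, R s ω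
        ≤ CE t ω + |(1 / (τ : ℝ)) * ∑ s ∈ Finset.Ico (t - τ) t, (CE t ω - CE s ω)|
          + Hmax * Real.sqrt (2 * Real.log (1 / δ) / (τ : ℝ))
      rw [Finset.sum_eq_zero fun s _ => (hω s).1, mul_zero,
        Finset.sum_eq_zero fun s _ => (by rw [(hω t).2, (hω s).2, sub_zero] :
          CE t ω - CE s ω = 0), mul_zero, abs_zero, (hω t).2, ← hH0, zero_mul]
      norm_num
    refine le_trans (ENNReal.ofReal_le_one.2 (by linarith)) ?_
    rw [← measure_univ (μ := μ)]
    exact measure_mono_ae (hmem.mono fun ω h _ => h)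
  · -- main case Hmax > 0
    have hL' : 0 < Real.log (1 / δ) := Real.log_pos (by rw [lt_div_iff₀ hδ0]; linarith)
    set Aτ : ℝ := Hmax * Real.sqrt (2 * Real.log (1 / δ) / (τ : ℝ)) with hAτ
    have hsqrt : 0 < Real.sqrt (2 * Real.log (1 / δ) / (τ : ℝ)) :=
      Real.sqrt_pos.2 (by positivity)
    set ε : ℝ := (τ : ℝ) * Aτ with hε_def
    have hε : 0 < ε := by
      rw [hε_def, hAτ]; positivity
    have ha := my_azuma μ F X Hmax hHpos hXmeas hXbd hXce (t - τ) τ hτ0 ε hε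
    rw [Nat.sub_add_cancel hτt.le] at ha
    have hexp : Real.exp (-(ε ^ 2) / (2 * (τ:ℝ) * Hmax ^ 2)) = δ := by
      have hsq : Real.sqrt (2 * Real.log (1 / δ) / (τ : ℝ)) ^ 2
          = 2 * Real.log (1 / δ) / (τ : ℝ) := Real.sq_sqrt (by positivity)
      have harg : -(ε ^ 2) / (2 * (τ:ℝ) * Hmax ^ 2) = -Real.log (1 / δ) := by
        rw [hε_def, hAτ, mul_pow, mul_pow, hsq]
        field_simp
      rw [harg, one_div, Real.log_inv, neg_neg, Real.exp_log hδ0]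
    have hE : μ {ω | ε ≤ ∑ s ∈ Finset.Ico (t - τ) t, X s ω} ≤ ENNReal.ofReal δ :=
      (ENNReal.le_ofReal_iff_toReal_le (measure_ne_top μ _) hδ0.le).2 (ha.trans_eq hexp)
    have hsub : {ω | ∑ s ∈ Finset.Ico (t - τ) t, X s ω ≤ ε}
        ⊆ {ω | (1 / (τ : ℝ)) * ∑ s ∈ Finset.Ico (t - τ) t, R s ω
          ≤ CE t ω + |(1 / (τ : ℝ)) * ∑ s ∈ Finset.Ico (t - τ) t, (CE t ω - CE s ω)|
            + Aτ} := by
      intro ω hω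
      simp only [Set.mem_setOf_eq] at hω ⊢
      have hcard : ((Finset.Ico (t - τ) t).card : ℝ) = (τ : ℝ) := by
        rw [Nat.card_Ico, Nat.sub_sub_self hτt.le]
      have e1 : ∑ s ∈ Finset.Ico (t - τ) t, R s ω
          = (∑ s ∈ Finset.Ico (t - τ) t, X s ω) + ∑ s ∈ Finset.Ico (t - τ) t, CE s ω := by
        rw [← Finset.sum_add_distrib]
        exact Finset.sum_congr rfl fun s _ => by
          show R s ω = (R s ω - CE s ω) + CE s ω; ring
      have e2 : ∑ s ∈ Finset.Ico (t - τ) t, (CE t ω - CE s ω)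
          = (τ:ℝ) * CE t ω - ∑ s ∈ Finset.Ico (t - τ) t, CE s ω := by
        rw [Finset.sum_sub_distrib, Finset.sum_const, nsmul_eq_mul, hcard]
      have key : (1 / (τ : ℝ)) * ∑ s ∈ Finset.Ico (t - τ) t, R s ω
          = (1 / (τ : ℝ)) * (∑ s ∈ Finset.Ico (t - τ) t, X s ω) + CE t ω
            - (1 / (τ : ℝ)) * ∑ s ∈ Finset.Ico (t - τ) t, (CE t ω - CE s ω) := by
        rw [e1, e2]
        field_simp
        ring
      have hAbs := neg_le_abs ((1 / (τ : ℝ)) * ∑ s ∈ Finset.Ico (t - τ) t, (CE t ω - CE s ω))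
      have hdiv : (1 / (τ : ℝ)) * (∑ s ∈ Finset.Ico (t - τ) t, X s ω) ≤ Aτ := by
        have := mul_le_mul_of_nonneg_left hω (le_of_lt (one_div_pos.2 hτR))
        rw [hε_def] at this
        calc (1 / (τ : ℝ)) * (∑ s ∈ Finset.Ico (t - τ) t, X s ω)
            ≤ (1 / (τ : ℝ)) * ((τ:ℝ) * Aτ) := this
          _ = Aτ := by field_simp
      linarith [hAbs, hdiv, key.le, key.ge]
    have hBmeas : MeasurableSet {ω | ∑ s ∈ Finset.Ico (t - τ) t, X s ω ≤ ε} :=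
      measurableSet_le (Finset.measurable_sum _ fun s _ =>
        (hXmeas s).mono (F.le s) le_rfl) measurable_const
    have hcompl : μ {ω | ∑ s ∈ Finset.Ico (t - τ) t, X s ω ≤ ε}ᶜ ≤ ENNReal.ofReal δ := by
      refine le_trans (measure_mono ?_) hE
      intro ω hω
      simp only [Set.mem_compl_iff, Set.mem_setOf_eq, not_le] at hω
      exact hω.le
    calc ENNReal.ofReal (1 - δ) = 1 - ENNReal.ofReal δ := by
          rw [ENNReal.ofReal_sub _ hδ0.le, ENNReal.ofReal_one]
      _ ≤ μ {ω | ∑ s ∈ Finset.Ico (t - τ) t, X s ω ≤ ε} := by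
          refine tsub_le_iff_right.2 ?_
          have h1 : μ {ω | ∑ s ∈ Finset.Ico (t - τ) t, X s ω ≤ ε}
              + μ {ω | ∑ s ∈ Finset.Ico (t - τ) t, X s ω ≤ ε}ᶜ = 1 := by
            rw [measure_add_measure_compl hBmeas, measure_univ]
          exact le_trans h1.ge (add_le_add_right hcompl _)
      _ ≤ _ := measure_mono hsub
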